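/- Let 𝔐 be a weight sequence system on ℝ^d satisfying (L) and (𝔐.2)', and let 𝒲 be a weight function system on ℝ^d satisfying (wM) and (N). Then for all q, r ∈ [1,∞] the sets 𝒮^{(𝔐)}_{(𝒲),q} and 𝒮^{(𝔐)}_{(𝒲),r} coincide; moreover, for every λ > 0 there exist μ > 0 and C > 0 such that ‖φ‖_{𝒮^{M^λ}_{w^λ,r}} ≤ C ‖φ‖_{𝒮^{M^μ}_{w^μ,q}} for every smooth φ : ℝ^d → ℂ with finite right-hand side. -/

import Mathlib

open MeasureTheory Filter ENNReal Asymptotics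

noncomputable section

/-- Partial derivative in the `i`-th coordinate direction. -/
def pd (d : ℕ) (i : Fin d) (f : EuclideanSpace ℝ (Fin d) → ℂ) :
    EuclideanSpace ℝ (Fin d) → ℂ :=
  fun x => fderiv ℝ f x (EuclideanSpace.single i 1)

/-- Iterated partial derivative in the `i`-th coordinate direction. -/
def pdPow (d : ℕ) (i : Fin d) :
    ℕ → (EuclideanSpace ℝ (Fin d) → ℂ) → EuclideanSpace ℝ (Fin d) → ℂ
  | 0, f => f
  | n + 1, f => pd d i (pdPow d i n f)

/-- Mixed partial derivative `∂^α` for a multi-index `α : Fin d → ℕ`. -/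
def pdMulti (d : ℕ) (α : Fin d → ℕ) (f : EuclideanSpace ℝ (Fin d) → ℂ) :
    EuclideanSpace ℝ (Fin d) → ℂ :=
  (List.finRange d).foldr (fun i g => pdPow d i (α i) g) f

/-- The Gelfand–Shilov seminorm `‖φ‖_{𝒮^M_{w,q}}`, as an `ℝ≥0∞`-valued quantity:
`sup_α ‖(∂^α φ)·w‖_{L^q} / M_α`. -/
def gsNorm (d : ℕ) (M : (Fin d → ℕ) → ℝ) (w : EuclideanSpace ℝ (Fin d) → ℝ)
    (q : ℝ≥0∞) (φ : EuclideanSpace ℝ (Fin d) → ℂ) : ℝ≥0∞ :=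
  ⨆ α : Fin d → ℕ,
    eLpNorm (fun x => ‖pdMulti d α φ x‖ * w x) q volume / ENNReal.ofReal (M α)

/-- The lattice point of `ℤ^d` inside `ℝ^d`. -/
def intPt (d : ℕ) (j : Fin d → ℤ) : EuclideanSpace ℝ (Fin d) :=
  (WithLp.equiv 2 (Fin d → ℝ)).symm fun i => (j i : ℝ)

/-- The associated function `ω_M(x) = sup_α log (|x^α| M_0 / M_α)` of a (multi-indexed)
sequence `M`. -/
def assocFun (d : ℕ) (M : (Fin d → ℕ) → ℝ) (x : EuclideanSpace ℝ (Fin d)) : ℝ :=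
  ⨆ α : Fin d → ℕ, Real.log ((∏ i, |x i| ^ α i) * M 0 / M α)

/-- `w` is a weight function system on `ℝ^d`: each `w λ` (for `λ > 0`) is continuous, `≥ 1`,
and `w λ ≤ w μ` pointwise whenever `μ ≤ λ`. -/
structure IsWFS (d : ℕ) (w : ℝ → EuclideanSpace ℝ (Fin d) → ℝ) : Prop where
  cont : ∀ l, 0 < l → Continuous (w l)
  one_le : ∀ l, 0 < l → ∀ x, 1 ≤ w l x
  mono : ∀ m l, 0 < m → m ≤ l → ∀ x, w l x ≤ w m x

/-- Condition (wM) (Beurling) for a weight function system. -/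
def WFS_wM_B (d : ℕ) (w : ℝ → EuclideanSpace ℝ (Fin d) → ℝ) : Prop :=
  ∀ l, 0 < l → ∃ m, 0 < m ∧ ∃ C, 0 < C ∧
    ∀ x y : EuclideanSpace ℝ (Fin d), ‖y‖ ≤ 1 → w l (x + y) ≤ C * w m x

/-- Condition {wM} (Roumieu) for a weight function system. -/
def WFS_wM_R (d : ℕ) (w : ℝ → EuclideanSpace ℝ (Fin d) → ℝ) : Prop :=
  ∀ m, 0 < m → ∃ l, 0 < l ∧ ∃ C, 0 < C ∧
    ∀ x y : EuclideanSpace ℝ (Fin d), ‖y‖ ≤ 1 → w l (x + y) ≤ C * w m x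

/-- Condition (M) (Beurling) for a weight function system. -/
def WFS_M_B (d : ℕ) (w : ℝ → EuclideanSpace ℝ (Fin d) → ℝ) : Prop :=
  ∀ l, 0 < l → ∃ m, 0 < m ∧ ∃ n, 0 < n ∧ ∃ C, 0 < C ∧
    ∀ x y : EuclideanSpace ℝ (Fin d), w l (x + y) ≤ C * w m x * w n y

/-- Condition (N) (Beurling) for a weight function system. -/
def WFS_N_B (d : ℕ) (w : ℝ → EuclideanSpace ℝ (Fin d) → ℝ) : Prop :=
  ∀ l, 0 < l → ∃ m, 0 < m ∧ Integrable (fun x => w l x / w m x) volume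

/-- Condition {N} (Roumieu) for a weight function system. -/
def WFS_N_R (d : ℕ) (w : ℝ → EuclideanSpace ℝ (Fin d) → ℝ) : Prop :=
  ∀ m, 0 < m → ∃ l, 0 < l ∧ Integrable (fun x => w l x / w m x) volume

/-- `M` is a weight sequence system on `ℝ^d`: each `M λ` (for `λ > 0`) is a positive
sequence with `(M^λ_α)^{1/|α|} → ∞` satisfying the log-convexity condition (M.1), and
`M^λ_α ≤ M^μ_α` whenever `λ ≤ μ`. -/
structure IsWSS (d : ℕ) (M : ℝ → (Fin d → ℕ) → ℝ) : Prop where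
  pos : ∀ l, 0 < l → ∀ α, 0 < M l α
  growth : ∀ l, 0 < l → ∀ R : ℝ, 0 < R → ∃ N : ℕ, ∀ α : Fin d → ℕ,
    N ≤ ∑ i, α i → R ^ (∑ i, α i) ≤ M l α
  logconvex : ∀ l, 0 < l → ∀ (α : Fin d → ℕ) (j : Fin d),
    M l (α + Pi.single j 1) ^ 2 ≤ M l α * M l (α + Pi.single j 2)
  mono : ∀ l m, 0 < l → l ≤ m → ∀ α, M l α ≤ M m α

/-- Condition (L) (Beurling) for a weight sequence system. -/
def WSS_L_B (d : ℕ) (M : ℝ → (Fin d → ℕ) → ℝ) : Prop :=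
  ∀ R : ℝ, 0 < R → ∀ l, 0 < l → ∃ m, 0 < m ∧ ∃ C, 0 < C ∧
    ∀ α : Fin d → ℕ, R ^ (∑ i, α i) * M m α ≤ C * M l α

/-- Condition {L} (Roumieu) for a weight sequence system. -/
def WSS_L_R (d : ℕ) (M : ℝ → (Fin d → ℕ) → ℝ) : Prop :=
  ∀ R : ℝ, 0 < R → ∀ m, 0 < m → ∃ l, 0 < l ∧ ∃ C, 0 < C ∧
    ∀ α : Fin d → ℕ, R ^ (∑ i, α i) * M m α ≤ C * M l α

/-- Condition (𝔐.2)' (Beurling) for a weight sequence system. -/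
def WSS_M2_B (d : ℕ) (M : ℝ → (Fin d → ℕ) → ℝ) : Prop :=
  ∀ l, 0 < l → ∃ m, 0 < m ∧ ∃ C, 0 < C ∧ ∃ H, 0 < H ∧
    ∀ (α : Fin d → ℕ) (j : Fin d),
      M m (α + Pi.single j 1) ≤ C * H ^ (∑ i, α i) * M l α

/-- Condition {𝔐.2}' (Roumieu) for a weight sequence system. -/
def WSS_M2_R (d : ℕ) (M : ℝ → (Fin d → ℕ) → ℝ) : Prop :=
  ∀ m, 0 < m → ∃ l, 0 < l ∧ ∃ C, 0 < C ∧ ∃ H, 0 < H ∧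
    ∀ (α : Fin d → ℕ) (j : Fin d),
      M l (α + Pi.single j 1) ≤ C * H ^ (∑ i, α i) * M m α

/-- A weight sequence system is accelerating if `M^λ_{α+e_j}/M^λ_α ≤ M^μ_{α+e_j}/M^μ_α`
for `λ ≤ μ`. -/
def WSSAccel (d : ℕ) (M : ℝ → (Fin d → ℕ) → ℝ) : Prop :=
  ∀ l m, 0 < l → l ≤ m → ∀ (α : Fin d → ℕ) (j : Fin d),
    M l (α + Pi.single j 1) / M l α ≤ M m (α + Pi.single j 1) / M m α

/-- A weight sequence system is isotropically decomposable: there is a partition of the `d`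
coordinates into `k` blocks (equivalently, after a permutation of the coordinates, a
decomposition `ℕ^d = ℕ^{d_1} × ⋯ × ℕ^{d_k}`) and positive functions `m^λ_j : ℕ → (0,∞)` with
`M^λ_α = ∏_j m^λ_j (|α^{(j)}|)`. -/
def IsoDecomposable (d : ℕ) (M : ℝ → (Fin d → ℕ) → ℝ) : Prop :=
  ∃ (k : ℕ) (b : Fin d → Fin k) (m : ℝ → Fin k → ℕ → ℝ),
    (∀ l, 0 < l → ∀ j n, 0 < m l j n) ∧
    ∀ l, 0 < l → ∀ α : Fin d → ℕ,
      M l α = ∏ j, m l j (∑ i ∈ Finset.univ.filter fun i => b i = j, α i)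

/-- Membership in the Beurling Gelfand–Shilov class `𝒮^{(𝔐)}_{(𝒲),q}`. -/
def gsBeurling (d : ℕ) (M : ℝ → (Fin d → ℕ) → ℝ) (w : ℝ → EuclideanSpace ℝ (Fin d) → ℝ)
    (q : ℝ≥0∞) (φ : EuclideanSpace ℝ (Fin d) → ℂ) : Prop :=
  ContDiff ℝ (⊤ : ℕ∞) φ ∧ ∀ l, 0 < l → gsNorm d (M l) (w l) q φ < ⊤

/-- Membership in the Roumieu Gelfand–Shilov class `𝒮^{{𝔐}}_{{𝒲},q}`. -/
def gsRoumieu (d : ℕ) (M : ℝ → (Fin d → ℕ) → ℝ) (w : ℝ → EuclideanSpace ℝ (Fin d) → ℝ)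
    (q : ℝ≥0∞) (φ : EuclideanSpace ℝ (Fin d) → ℂ) : Prop :=
  ContDiff ℝ (⊤ : ℕ∞) φ ∧ ∃ l, 0 < l ∧ gsNorm d (M l) (w l) q φ < ⊤

/-- Membership in the auxiliary space `𝒮̃^{(𝔐)}_{(𝒲)}`. -/
def gsTilde (d : ℕ) (M : ℝ → (Fin d → ℕ) → ℝ) (w : ℝ → EuclideanSpace ℝ (Fin d) → ℝ)
    (ψ : EuclideanSpace ℝ (Fin d) → ℂ) : Prop :=
  ContDiff ℝ (⊤ : ℕ∞) ψ ∧ ∀ l, 0 < l → ∀ k : ℕ, ∃ C : ℝ,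
    ∀ (α : Fin d → ℕ) (x : EuclideanSpace ℝ (Fin d)),
      ‖pdMulti d α ψ x‖ * (1 + ‖x‖) ^ k * w l x / M l α ≤ C

end

noncomputable section
set_option maxHeartbeats 1000000

theorem pd_contDiff {d : ℕ} {i : Fin d} {f : EuclideanSpace ℝ (Fin d) → ℂ}
    (hf : ContDiff ℝ (⊤ : ℕ∞) f) : ContDiff ℝ (⊤ : ℕ∞) (pd d i f) := by
  have h1 : ContDiff ℝ (⊤ : ℕ∞) (fderiv ℝ f) := hf.fderiv_right (by simp)
  exact h1.clm_apply contDiff_const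

theorem pd_comm {d : ℕ} {i j : Fin d} {f : EuclideanSpace ℝ (Fin d) → ℂ}
    (hf : ContDiff ℝ (⊤ : ℕ∞) f) : pd d i (pd d j f) = pd d j (pd d i f) := by
  funext x
  have h1 : ContDiff ℝ (⊤ : ℕ∞) (fderiv ℝ f) := hf.fderiv_right (by simp)
  have hdf : ∀ y, HasFDerivAt f (fderiv ℝ f y) y := fun y =>
    (hf.differentiable (by simp) y).hasFDerivAt
  have hd2 : HasFDerivAt (fderiv ℝ f) (fderiv ℝ (fderiv ℝ f) x) x :=
    ((h1.differentiable (by simp)) x).hasFDerivAt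
  have hsymm := second_derivative_symmetric hdf hd2
  have key : ∀ v : EuclideanSpace ℝ (Fin d),
      fderiv ℝ (fun y => fderiv ℝ f y v) x = (fderiv ℝ (fderiv ℝ f) x).flip v := by
    intro v
    have hdiff : DifferentiableAt ℝ (fderiv ℝ f) x := (h1.differentiable (by simp)) x
    rw [fderiv_clm_apply hdiff (differentiableAt_const v)]
    ext w
    simp
  show fderiv ℝ (fun y => fderiv ℝ f y (EuclideanSpace.single j 1)) x (EuclideanSpace.single i 1) = _
  rw [key]
  show _ = fderiv ℝ (fun y => fderiv ℝ f y (EuclideanSpace.single i 1)) x (EuclideanSpace.single j 1)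
  rw [key]
  simpa using hsymm (EuclideanSpace.single i 1) (EuclideanSpace.single j 1)
theorem pdPow_contDiff {d : ℕ} {i : Fin d} {n : ℕ} {f : EuclideanSpace ℝ (Fin d) → ℂ}
    (hf : ContDiff ℝ (⊤ : ℕ∞) f) : ContDiff ℝ (⊤ : ℕ∞) (pdPow d i n f) := by
  induction n with
  | zero => exact hf
  | succ n ih => exact pd_contDiff ih

theorem foldr_contDiff {d : ℕ} (α : Fin d → ℕ) (L : List (Fin d))
    {f : EuclideanSpace ℝ (Fin d) → ℂ} (hf : ContDiff ℝ (⊤ : ℕ∞) f) :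
    ContDiff ℝ (⊤ : ℕ∞) (L.foldr (fun i g => pdPow d i (α i) g) f) := by
  induction L with
  | nil => exact hf
  | cons j tl ih => exact pdPow_contDiff ih

theorem pdMulti_contDiff {d : ℕ} {α : Fin d → ℕ} {f : EuclideanSpace ℝ (Fin d) → ℂ}
    (hf : ContDiff ℝ (⊤ : ℕ∞) f) : ContDiff ℝ (⊤ : ℕ∞) (pdMulti d α f) :=
  foldr_contDiff α _ hf

theorem pd_pdPow_comm {d : ℕ} {i j : Fin d} {n : ℕ} {f : EuclideanSpace ℝ (Fin d) → ℂ}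
    (hf : ContDiff ℝ (⊤ : ℕ∞) f) : pd d i (pdPow d j n f) = pdPow d j n (pd d i f) := by
  induction n with
  | zero => rfl
  | succ n ih =>
    show pd d i (pd d j (pdPow d j n f)) = pd d j (pdPow d j n (pd d i f))
    rw [pd_comm (pdPow_contDiff hf), ih]

theorem pd_foldr_comm {d : ℕ} (α : Fin d → ℕ) (i : Fin d) (L : List (Fin d))
    {f : EuclideanSpace ℝ (Fin d) → ℂ} (hf : ContDiff ℝ (⊤ : ℕ∞) f) :
    L.foldr (fun j g => pdPow d j (α j) g) (pd d i f)
      = pd d i (L.foldr (fun j g => pdPow d j (α j) g) f) := by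
  induction L with
  | nil => rfl
  | cons j tl ih =>
    show pdPow d j (α j) (tl.foldr _ (pd d i f)) = _
    rw [ih, ← pd_pdPow_comm (foldr_contDiff α tl hf)]
    rfl

theorem foldr_congr_of_not_mem {d : ℕ} (α β : Fin d → ℕ) (L : List (Fin d))
    (h : ∀ j ∈ L, α j = β j) (f : EuclideanSpace ℝ (Fin d) → ℂ) :
    L.foldr (fun j g => pdPow d j (α j) g) f = L.foldr (fun j g => pdPow d j (β j) g) f := by
  induction L with
  | nil => rfl
  | cons j tl ih =>
    show pdPow d j (α j) _ = pdPow d j (β j) _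
    rw [h j List.mem_cons_self, ih (fun k hk => h k (List.mem_cons_of_mem j hk))]

theorem pdMulti_single_add {d : ℕ} (α : Fin d → ℕ) (i : Fin d)
    {f : EuclideanSpace ℝ (Fin d) → ℂ} (hf : ContDiff ℝ (⊤ : ℕ∞) f) :
    pdMulti d (α + Pi.single i 1 : Fin d → ℕ) f = pd d i (pdMulti d α f) := by
  have key : ∀ L : List (Fin d), L.Nodup → i ∈ L →
      L.foldr (fun j g => pdPow d j ((α + Pi.single i 1 : Fin d → ℕ) j) g) f
        = pd d i (L.foldr (fun j g => pdPow d j (α j) g) f) := by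
    intro L
    induction L with
    | nil => intro _ h; simp at h
    | cons j tl ih =>
      intro hnd hmem
      rcases List.mem_cons.mp hmem with h | h
      · subst h
        have hnotmem : i ∉ tl := (List.nodup_cons.mp hnd).1
        show pdPow d i ((α + Pi.single i 1 : Fin d → ℕ) i) _ = _
        have h1 : (α + Pi.single i 1 : Fin d → ℕ) i = α i + 1 := by simp
        rw [h1, foldr_congr_of_not_mem (α + Pi.single i 1 : Fin d → ℕ) α tl
          (fun k hk => by
            have : k ≠ i := fun h => hnotmem (h ▸ hk)
            simp [Pi.single_apply, this])]
        show pd d i (pdPow d i (α i) _) = pd d i (pdPow d i (α i) _)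
        rfl
      · have hji : j ≠ i := by
          rintro rfl; exact (List.nodup_cons.mp hnd).1 h
        have h1 : (α + Pi.single i 1 : Fin d → ℕ) j = α j := by simp [Pi.single_apply, hji]
        show pdPow d j ((α + Pi.single i 1 : Fin d → ℕ) j)
            (tl.foldr (fun k g => pdPow d k ((α + Pi.single i 1 : Fin d → ℕ) k) g) f)
          = pd d i (pdPow d j (α j) (tl.foldr (fun k g => pdPow d k (α k) g) f))
        rw [h1, ih (List.nodup_cons.mp hnd).2 h, ← pd_pdPow_comm (foldr_contDiff α tl hf)]
  exact key (List.finRange d) (List.nodup_finRange d) (List.mem_finRange i)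

theorem pdMulti_pd {d : ℕ} (α : Fin d → ℕ) (i : Fin d)
    {f : EuclideanSpace ℝ (Fin d) → ℂ} (hf : ContDiff ℝ (⊤ : ℕ∞) f) :
    pdMulti d α (pd d i f) = pd d i (pdMulti d α f) :=
  pd_foldr_comm α i _ hf

theorem pdMulti_zero {d : ℕ} (f : EuclideanSpace ℝ (Fin d) → ℂ) :
    pdMulti d 0 f = f := by
  show (List.finRange d).foldr _ f = f
  induction (List.finRange d) with
  | nil => rfl
  | cons j tl ih => show pdPow d j 0 _ = f; rw [show pdPow d j 0 = id from rfl]; exact ih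

theorem pdMulti_comp {d : ℕ} (α β : Fin d → ℕ)
    {f : EuclideanSpace ℝ (Fin d) → ℂ} (hf : ContDiff ℝ (⊤ : ℕ∞) f) :
    pdMulti d β (pdMulti d α f) = pdMulti d (α + β) f := by
  have key : ∀ (n : ℕ) (β : Fin d → ℕ), (∑ i, β i) = n →
      pdMulti d β (pdMulti d α f) = pdMulti d (α + β) f := by
    intro n
    induction n using Nat.strong_induction_on with
    | _ n ih =>
      intro β hn
      rcases Nat.eq_zero_or_pos n with h0 | hpos
      · subst h0
        have hb : β = 0 := by
          funext i
          exact Finset.sum_eq_zero_iff.mp hn i (Finset.mem_univ i)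
        subst hb
        rw [pdMulti_zero, add_zero]
      · have : ∃ i, 0 < β i := by
          by_contra hc
          push_neg at hc
          have : (∑ i, β i) = 0 := Finset.sum_eq_zero (fun i _ => Nat.le_zero.mp (hc i))
          omega
        obtain ⟨i, hi⟩ := this
        set β' : Fin d → ℕ := fun j => if j = i then β j - 1 else β j with hβ'
        have hβeq : β = β' + Pi.single i 1 := by
          funext j
          by_cases hji : j = i
          · subst hji; simp [hβ']; omega
          · simp [hβ', hji, Pi.single_apply]
        have hsum : (∑ j, β' j) = n - 1 := by
          have : (∑ j, β j) = (∑ j, β' j) + 1 := by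
            rw [hβeq]
            simp [Finset.sum_add_distrib, Pi.single_apply]
          omega
        have hmulti : ContDiff ℝ (⊤ : ℕ∞) (pdMulti d α f) := pdMulti_contDiff hf
        rw [hβeq, pdMulti_single_add β' i hmulti, ih (n-1) (by omega) β' hsum,
          ← add_assoc, pdMulti_single_add (α + β') i hf]
  exact key _ β rfl
theorem ofReal_norm_eq_coe_nnnorm {E : Type*} [SeminormedAddCommGroup E] (a : E) :
    ENNReal.ofReal ‖a‖ = (‖a‖₊ : ℝ≥0∞) :=
  (ofReal_norm a).trans (enorm_eq_nnnorm a)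

theorem ftc1 {d : ℕ} (i : Fin d) {f : EuclideanSpace ℝ (Fin d) → ℂ}
    (hf : ContDiff ℝ (⊤ : ℕ∞) f) (hpd : Continuous (pd d i f)) (x : EuclideanSpace ℝ (Fin d)) :
    (‖f x‖₊ : ℝ≥0∞) ≤ ∫⁻ t in Set.Icc (0:ℝ) 1,
      ((‖f (x + t • EuclideanSpace.single i 1)‖₊ : ℝ≥0∞)
        + (‖pd d i f (x + t • EuclideanSpace.single i 1)‖₊ : ℝ≥0∞)) := by
  set v : EuclideanSpace ℝ (Fin d) := EuclideanSpace.single i 1 with hv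
  set g : ℝ → ℂ := fun t => f (x + t • v) with hg
  have hg' : ∀ t : ℝ, HasDerivAt g (pd d i f (x + t • v)) t := by
    intro t
    have hline : HasDerivAt (fun t : ℝ => x + t • v) v t := by
      simpa using ((hasDerivAt_id t).smul_const v).const_add x
    have := ((hf.differentiable (by simp) (x + t • v)).hasFDerivAt).comp_hasDerivAt t hline
    exact this
  have hgc : Continuous g := (hf.continuous).comp (by continuity)
  have hg'c : Continuous (fun t : ℝ => pd d i f (x + t • v)) := hpd.comp (by continuity)
  set A : ℝ := ∫ u in (0:ℝ)..1, ‖pd d i f (x + u • v)‖ with hA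
  have hAnn : 0 ≤ A := intervalIntegral.integral_nonneg zero_le_one (fun u _ => norm_nonneg _)
  have key : ∀ t ∈ Set.Icc (0:ℝ) 1, ‖g 0‖ ≤ ‖g t‖ + A := by
    intro t ht
    have hint : ∫ u in (0:ℝ)..t, pd d i f (x + u • v) = g t - g 0 :=
      intervalIntegral.integral_eq_sub_of_hasDerivAt (fun u _ => hg' u)
        (hg'c.intervalIntegrable 0 t)
    have h2 : ‖g t - g 0‖ ≤ ∫ u in (0:ℝ)..t, ‖pd d i f (x + u • v)‖ := by
      rw [← hint]
      exact intervalIntegral.norm_integral_le_integral_norm ht.1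
    have h3 : (∫ u in (0:ℝ)..t, ‖pd d i f (x + u • v)‖) ≤ A := by
      apply intervalIntegral.integral_mono_interval le_rfl ht.1 ht.2
        (Eventually.of_forall fun u => norm_nonneg _)
        ((hg'c.norm).intervalIntegrable 0 1)
    calc ‖g 0‖ = ‖g t - (g t - g 0)‖ := by ring_nf
      _ ≤ ‖g t‖ + ‖g t - g 0‖ := norm_sub_le _ _
      _ ≤ ‖g t‖ + A := by linarith
  have hIoc : ENNReal.ofReal A = ∫⁻ u in Set.Ioc (0:ℝ) 1,
      (‖pd d i f (x + u • v)‖₊ : ℝ≥0∞) := by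
    rw [hA, intervalIntegral.integral_of_le zero_le_one,
      ofReal_integral_eq_lintegral_ofReal ((hg'c.norm).integrableOn_Ioc)
        (Eventually.of_forall fun u => norm_nonneg _)]
    simp_rw [ofReal_norm_eq_coe_nnnorm]
  have hAle : ENNReal.ofReal A ≤ ∫⁻ t in Set.Icc (0:ℝ) 1,
      (‖pd d i f (x + t • v)‖₊ : ℝ≥0∞) := by
    rw [hIoc]
    exact lintegral_mono_set Set.Ioc_subset_Icc_self
  have hmeas1 : Measurable (fun t : ℝ => (‖g t‖₊ : ℝ≥0∞)) :=
    (hgc.measurable).nnnorm.coe_nnreal_ennreal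
  calc (‖f x‖₊ : ℝ≥0∞) = ∫⁻ _ in Set.Icc (0:ℝ) 1, (‖g 0‖₊ : ℝ≥0∞) := by
        rw [setLIntegral_const, Real.volume_Icc]
        norm_num
        simp [hg]
    _ ≤ ∫⁻ t in Set.Icc (0:ℝ) 1, ((‖g t‖₊ : ℝ≥0∞) + ENNReal.ofReal A) := by
        apply setLIntegral_mono (hmeas1.add measurable_const)
        intro t ht
        have := key t ht
        calc (‖g 0‖₊ : ℝ≥0∞) = ENNReal.ofReal ‖g 0‖ := (ofReal_norm_eq_coe_nnnorm _).symm
          _ ≤ ENNReal.ofReal (‖g t‖ + A) := ENNReal.ofReal_le_ofReal this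
          _ = ENNReal.ofReal ‖g t‖ + ENNReal.ofReal A := ENNReal.ofReal_add (norm_nonneg _) hAnn
          _ = (‖g t‖₊ : ℝ≥0∞) + ENNReal.ofReal A := by rw [ofReal_norm_eq_coe_nnnorm]
    _ = (∫⁻ t in Set.Icc (0:ℝ) 1, (‖g t‖₊ : ℝ≥0∞)) + ENNReal.ofReal A := by
        rw [lintegral_add_right _ measurable_const, setLIntegral_const, Real.volume_Icc]
        norm_num
    _ ≤ (∫⁻ t in Set.Icc (0:ℝ) 1, (‖g t‖₊ : ℝ≥0∞))
        + ∫⁻ t in Set.Icc (0:ℝ) 1, (‖pd d i f (x + t • v)‖₊ : ℝ≥0∞) := by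
        exact add_le_add_right hAle _
    _ = _ := by
        rw [← lintegral_add_left hmeas1]
def embd (d : ℕ) : (Fin d → ℝ) → EuclideanSpace ℝ (Fin d) :=
  MeasurableEquiv.toLp 2 (Fin d → ℝ)

theorem embd_continuous (d : ℕ) : Continuous (embd d) := by
  rw [show embd d = ⇑(WithLp.equiv 2 (Fin d → ℝ)).symm from rfl]
  exact PiLp.continuous_toLp (p := 2) (β := fun _ : Fin d => ℝ)

theorem embd_apply (d : ℕ) (u : Fin d → ℝ) (j : Fin d) : embd d u j = u j := rfl

/-- The measure family on coordinates: Lebesgue restricted to `[0,1]`. -/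
def iccM (d : ℕ) : ∀ _ : Fin d, Measure ℝ := fun _ => (volume : Measure ℝ).restrict (Set.Icc 0 1)

instance (d : ℕ) (i : Fin d) : IsFiniteMeasure (iccM d i) := by
  unfold iccM
  constructor
  rw [Measure.restrict_apply_univ, Real.volume_Icc]
  norm_num

def cubeInt (d : ℕ) (s : Finset (Fin d)) (β : Fin d → ℕ)
    (f : EuclideanSpace ℝ (Fin d) → ℂ) (x : EuclideanSpace ℝ (Fin d)) : ℝ≥0∞ :=
  lmarginal (iccM d) s (fun u => (‖pdMulti d β f (x + embd d u)‖₊ : ℝ≥0∞)) 0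

theorem cubeF_meas {d : ℕ} (β : Fin d → ℕ) {f : EuclideanSpace ℝ (Fin d) → ℂ}
    (hf : ContDiff ℝ (⊤ : ℕ∞) f) (x : EuclideanSpace ℝ (Fin d)) :
    Measurable (fun u : Fin d → ℝ => (‖pdMulti d β f (x + embd d u)‖₊ : ℝ≥0∞)) := by
  have : Continuous fun u : Fin d → ℝ => pdMulti d β f (x + embd d u) :=
    ((pdMulti_contDiff hf).continuous).comp (by
      exact continuous_const.add (embd_continuous d))
  exact this.measurable.nnnorm.coe_nnreal_ennreal

theorem trans_eq {d : ℕ} (s : Finset (Fin d)) {i : Fin d} (hi : i ∉ s)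
    (F : EuclideanSpace ℝ (Fin d) → ℝ≥0∞) (x : EuclideanSpace ℝ (Fin d)) (t : ℝ) :
    lmarginal (iccM d) s (fun u => F (x + embd d u)) (Function.update 0 i t)
      = lmarginal (iccM d) s
        (fun u => F ((x + t • EuclideanSpace.single i 1) + embd d u)) 0 := by
  unfold lmarginal
  apply lintegral_congr
  intro y
  dsimp only
  congr 1
  set A : Fin d → ℝ := Function.updateFinset (Function.update (0 : Fin d → ℝ) i t) s y with hA
  set B : Fin d → ℝ := Function.updateFinset (0 : Fin d → ℝ) s y with hB
  show x + embd d A = (x + t • EuclideanSpace.single i 1) + embd d B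
  ext j
  show x j + A j = (x j + (t • EuclideanSpace.single i 1 : EuclideanSpace ℝ (Fin d)) j) + B j
  have hsingle : (t • EuclideanSpace.single i 1 : EuclideanSpace ℝ (Fin d)) j
      = if j = i then t else 0 := by
    rw [PiLp.smul_apply, EuclideanSpace.single_apply]
    by_cases h : j = i <;> simp [h]
  by_cases hjs : j ∈ s
  · have hji : j ≠ i := fun h => hi (h ▸ hjs)
    simp [hA, hB, Function.updateFinset, hjs, hsingle, hji]
  · by_cases hji : j = i
    · subst hji
      simp [hA, hB, Function.updateFinset, hjs, hsingle]
    · simp [hA, hB, Function.updateFinset, hjs, hsingle, hji, Function.update_of_ne hji]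

def chi {d : ℕ} (T : Finset (Fin d)) : Fin d → ℕ := fun j => if j ∈ T then 1 else 0

theorem chi_insert {d : ℕ} {T : Finset (Fin d)} {i : Fin d} (hi : i ∉ T) :
    chi (insert i T) = chi T + Pi.single i 1 := by
  funext j
  by_cases hji : j = i
  · subst hji; simp [chi, hi]
  · simp [chi, hji, Pi.single_apply, Finset.mem_insert]

theorem chi_sum_le {d : ℕ} (T : Finset (Fin d)) : (∑ j, chi T j) ≤ d := by
  calc (∑ j, chi T j) ≤ ∑ j : Fin d, 1 := Finset.sum_le_sum (fun j _ => by
        unfold chi; split <;> omega)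
    _ = d := by simp

theorem cube_le {d : ℕ} (s : Finset (Fin d)) :
    ∀ (f : EuclideanSpace ℝ (Fin d) → ℂ), ContDiff ℝ (⊤ : ℕ∞) f →
    ∀ x, (‖f x‖₊ : ℝ≥0∞) ≤ ∑ T ∈ s.powerset, cubeInt d s (chi T) f x := by
  induction s using Finset.induction_on with
  | empty =>
    intro f hf x
    rw [Finset.powerset_empty, Finset.sum_singleton]
    unfold cubeInt
    rw [lmarginal_empty]
    have h0 : chi (∅ : Finset (Fin d)) = 0 := by funext j; simp [chi]
    have hx : x + embd d (0 : Fin d → ℝ) = x := by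
      ext j
      show x j + (0:ℝ) = x j
      ring
    rw [h0, pdMulti_zero, hx]
  | @insert i s hi ih =>
    intro f hf x
    set v : EuclideanSpace ℝ (Fin d) := EuclideanSpace.single i 1 with hv
    have hf' : ContDiff ℝ (⊤ : ℕ∞) (pd d i f) := pd_contDiff hf
    have hmeas : ∀ (β : Fin d → ℕ),
        Measurable (fun u : Fin d → ℝ => (‖pdMulti d β f (x + embd d u)‖₊ : ℝ≥0∞)) :=
      fun β => cubeF_meas β hf x
    have hLmeas : ∀ (β : Fin d → ℕ), Measurable (fun t : ℝ =>
        lmarginal (iccM d) s (fun u => (‖pdMulti d β f (x + embd d u)‖₊ : ℝ≥0∞))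
          (Function.update (0 : Fin d → ℝ) i t)) := by
      intro β
      exact (Measurable.lmarginal (iccM d) (hmeas β)).comp (measurable_update _)
    calc (‖f x‖₊ : ℝ≥0∞)
        ≤ ∫⁻ t in Set.Icc (0:ℝ) 1,
            ((‖f (x + t • v)‖₊ : ℝ≥0∞) + (‖pd d i f (x + t • v)‖₊ : ℝ≥0∞)) :=
          ftc1 i hf (pd_contDiff hf).continuous x
      _ ≤ ∫⁻ t in Set.Icc (0:ℝ) 1, ∑ T ∈ s.powerset,
            ((lmarginal (iccM d) s (fun u => (‖pdMulti d (chi T) f (x + embd d u)‖₊ : ℝ≥0∞))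
                (Function.update (0 : Fin d → ℝ) i t))
              + (lmarginal (iccM d) s
                  (fun u => (‖pdMulti d (chi (insert i T)) f (x + embd d u)‖₊ : ℝ≥0∞))
                (Function.update (0 : Fin d → ℝ) i t))) := by
          apply lintegral_mono
          intro t
          have h1 := ih f hf (x + t • v)
          have h2 := ih (pd d i f) hf' (x + t • v)
          have e1 : ∀ T ∈ s.powerset, cubeInt d s (chi T) f (x + t • v)
              = lmarginal (iccM d) s
                  (fun u => (‖pdMulti d (chi T) f (x + embd d u)‖₊ : ℝ≥0∞))
                  (Function.update (0 : Fin d → ℝ) i t) := by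
            intro T _
            exact (trans_eq s hi (fun z => (‖pdMulti d (chi T) f z‖₊ : ℝ≥0∞)) x t).symm
          have e2 : ∀ T ∈ s.powerset, cubeInt d s (chi T) (pd d i f) (x + t • v)
              = lmarginal (iccM d) s
                  (fun u => (‖pdMulti d (chi (insert i T)) f (x + embd d u)‖₊ : ℝ≥0∞))
                  (Function.update (0 : Fin d → ℝ) i t) := by
            intro T hT
            have hiT : i ∉ T := fun h => hi (Finset.mem_powerset.mp hT h)
            have hrw : pdMulti d (chi T) (pd d i f) = pdMulti d (chi (insert i T)) f := by
              rw [pdMulti_pd _ _ hf, chi_insert hiT, pdMulti_single_add _ _ hf]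
            unfold cubeInt
            rw [hrw]
            exact (trans_eq s hi (fun z => (‖pdMulti d (chi (insert i T)) f z‖₊ : ℝ≥0∞)) x t).symm
          dsimp only
          rw [Finset.sum_add_distrib]
          refine add_le_add ?_ ?_
          · calc (‖f (x + t • v)‖₊ : ℝ≥0∞) ≤ _ := h1
              _ = _ := Finset.sum_congr rfl e1
          · calc (‖pd d i f (x + t • v)‖₊ : ℝ≥0∞) ≤ _ := h2
              _ = _ := Finset.sum_congr rfl e2
      _ = ∑ T ∈ s.powerset,
            (cubeInt d (insert i s) (chi T) f x
              + cubeInt d (insert i s) (chi (insert i T)) f x) := by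
          rw [lintegral_finset_sum (f := fun T t =>
              lmarginal (iccM d) s (fun u => (‖pdMulti d (chi T) f (x + embd d u)‖₊ : ℝ≥0∞))
                (Function.update (0 : Fin d → ℝ) i t)
              + lmarginal (iccM d) s
                (fun u => (‖pdMulti d (chi (insert i T)) f (x + embd d u)‖₊ : ℝ≥0∞))
                (Function.update (0 : Fin d → ℝ) i t)) _ (fun T _ => (hLmeas (chi T)).add (hLmeas (chi (insert i T))))]
          refine Finset.sum_congr rfl (fun T _ => ?_)
          rw [lintegral_add_left (hLmeas (chi T))]
          unfold cubeInt
          rw [lmarginal_insert _ (hmeas (chi T)) hi, lmarginal_insert _ (hmeas (chi (insert i T))) hi]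
          rfl
      _ = ∑ T ∈ (insert i s).powerset, cubeInt d (insert i s) (chi T) f x := by
          rw [Finset.powerset_insert, Finset.sum_union, Finset.sum_add_distrib]
          · congr 1
            rw [Finset.sum_image]
            intro a ha b hb hab
            have hia : i ∉ a := fun h => hi (Finset.mem_powerset.mp ha h)
            have hib : i ∉ b := fun h => hi (Finset.mem_powerset.mp hb h)
            rw [← Finset.erase_insert hia, ← Finset.erase_insert hib, hab]
          · rw [Finset.disjoint_left]
            intro T hT hT2
            obtain ⟨T', hT', rfl⟩ := Finset.mem_image.mp hT2
            exact hi (Finset.mem_powerset.mp hT (Finset.mem_insert_self i T'))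
theorem pi_iccM_eq (d : ℕ) :
    Measure.pi (iccM d) = (Measure.pi (fun _ : Fin d => (volume : Measure ℝ))).restrict
      (Set.univ.pi fun _ => Set.Icc (0:ℝ) 1) := by
  refine Measure.pi_eq (fun s hs => ?_)
  rw [Measure.restrict_apply (MeasurableSet.univ_pi hs)]
  rw [← Set.pi_inter_distrib, Measure.pi_pi]
  unfold iccM
  exact Finset.prod_congr rfl (fun i _ => (Measure.restrict_apply (hs i)).symm)

theorem embd_norm_le {d : ℕ} {u : Fin d → ℝ}
    (hu : u ∈ Set.univ.pi fun _ : Fin d => Set.Icc (0:ℝ) 1) : ‖embd d u‖ ≤ (d : ℝ) := by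
  have h1 : ‖embd d u‖ = Real.sqrt (∑ i, ‖u i‖ ^ 2) := by
    rw [EuclideanSpace.norm_eq]
    rfl
  rw [h1]
  have h2 : (∑ i, ‖u i‖ ^ 2) ≤ (d : ℝ) := by
    calc (∑ i, ‖u i‖ ^ 2) ≤ ∑ _i : Fin d, 1 := by
          refine Finset.sum_le_sum (fun i _ => ?_)
          have := hu i (Set.mem_univ i)
          have h3 : |u i| ≤ 1 := by
            rw [abs_le]; constructor <;> [linarith [this.1]; linarith [this.2]]
          calc ‖u i‖ ^ 2 = |u i| ^ 2 := rfl
            _ ≤ 1 ^ 2 := by nlinarith [abs_nonneg (u i)]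
            _ = 1 := one_pow 2
      _ = (d : ℝ) := by simp
  calc Real.sqrt (∑ i, ‖u i‖ ^ 2) ≤ Real.sqrt (d : ℝ) := Real.sqrt_le_sqrt h2
    _ ≤ (d : ℝ) := by
        rcases Nat.eq_zero_or_pos d with h | h
        · subst h; simp
        · have : (1:ℝ) ≤ (d:ℝ) := by exact_mod_cast h
          nlinarith [Real.sq_sqrt (by positivity : (0:ℝ) ≤ (d:ℝ)),
            Real.sqrt_nonneg (d:ℝ)]

theorem cubeInt_weight {d : ℕ} {f : EuclideanSpace ℝ (Fin d) → ℂ}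
    (hf : ContDiff ℝ (⊤ : ℕ∞) f) (β : Fin d → ℕ)
    (wl wm : EuclideanSpace ℝ (Fin d) → ℝ) (hwm_cont : Continuous wm)
    (hwm_nn : ∀ y, 0 ≤ wm y) (C : ℝ)
    (hbound : ∀ z u, ‖u‖ ≤ (d:ℝ) → wl (z + u) ≤ C * wm z)
    (x : EuclideanSpace ℝ (Fin d)) :
    ENNReal.ofReal (wl x) * cubeInt d Finset.univ β f x
      ≤ ENNReal.ofReal C *
        ∫⁻ y, (‖pdMulti d β f y‖₊ : ℝ≥0∞) * ENNReal.ofReal (wm y) := by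
  set G : EuclideanSpace ℝ (Fin d) → ℝ≥0∞ :=
    fun y => (‖pdMulti d β f y‖₊ : ℝ≥0∞) * ENNReal.ofReal (wm y) with hG
  have hGmeas : Measurable G := by
    refine Measurable.mul (f := fun y => (‖pdMulti d β f y‖₊ : ℝ≥0∞))
      (g := fun y => ENNReal.ofReal (wm y)) ?_ ?_
    · exact ((pdMulti_contDiff hf).continuous).measurable.nnnorm.coe_nnreal_ennreal
    · exact (measurable_ofReal).comp hwm_cont.measurable
  have h1 : cubeInt d Finset.univ β f x
      = ∫⁻ u, (‖pdMulti d β f (x + embd d u)‖₊ : ℝ≥0∞) ∂(Measure.pi (iccM d)) := by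
    unfold cubeInt
    rw [lmarginal_univ]
  rw [h1, ← lintegral_const_mul _ (cubeF_meas β hf x)]
  set box : Set (Fin d → ℝ) := Set.univ.pi fun _ => Set.Icc (0:ℝ) 1 with hbox
  have hboxmeas : MeasurableSet box := MeasurableSet.univ_pi (fun _ => measurableSet_Icc)
  have hae : ∀ᵐ u ∂(Measure.pi (iccM d)), u ∈ box := by
    rw [ae_iff]
    have : {u : Fin d → ℝ | ¬ u ∈ box} = boxᶜ := rfl
    rw [this, pi_iccM_eq, Measure.restrict_apply hboxmeas.compl, Set.compl_inter_self]
    exact measure_empty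
  have hptwise : ∀ u ∈ box,
      ENNReal.ofReal (wl x) * (‖pdMulti d β f (x + embd d u)‖₊ : ℝ≥0∞)
        ≤ ENNReal.ofReal C * G (x + embd d u) := by
    intro u hu
    have hwlx : wl x ≤ C * wm (x + embd d u) := by
      have := hbound (x + embd d u) (-(embd d u)) (by
        rw [norm_neg]; exact embd_norm_le hu)
      simpa using this
    calc ENNReal.ofReal (wl x) * (‖pdMulti d β f (x + embd d u)‖₊ : ℝ≥0∞)
        ≤ ENNReal.ofReal (C * wm (x + embd d u)) * (‖pdMulti d β f (x + embd d u)‖₊ : ℝ≥0∞) :=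
          mul_le_mul_left (ENNReal.ofReal_le_ofReal hwlx) _
      _ = ENNReal.ofReal C * G (x + embd d u) := by
          rw [hG]
          rcases le_or_gt C 0 with hC | hC
          · rw [ENNReal.ofReal_eq_zero.mpr (mul_nonpos_iff.mpr (Or.inr ⟨hC, hwm_nn _⟩)),
              ENNReal.ofReal_eq_zero.mpr hC]
            simp
          · rw [ENNReal.ofReal_mul hC.le]
            ring
  calc (∫⁻ u, ENNReal.ofReal (wl x) * (‖pdMulti d β f (x + embd d u)‖₊ : ℝ≥0∞)
          ∂(Measure.pi (iccM d)))
      ≤ ∫⁻ u, ENNReal.ofReal C * G (x + embd d u) ∂(Measure.pi (iccM d)) := by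
        refine lintegral_mono_ae ?_
        filter_upwards [hae] with u hu
        exact hptwise u hu
    _ ≤ ∫⁻ u, ENNReal.ofReal C * G (x + embd d u)
          ∂(Measure.pi (fun _ : Fin d => (volume : Measure ℝ))) := by
        rw [pi_iccM_eq]
        exact lintegral_mono' Measure.restrict_le_self le_rfl
    _ = ENNReal.ofReal C * ∫⁻ u, G (x + embd d u)
          ∂(Measure.pi (fun _ : Fin d => (volume : Measure ℝ))) := by
        rw [lintegral_const_mul]
        exact (hGmeas.comp (measurable_const.add (embd_continuous d).measurable))
    _ = ENNReal.ofReal C * ∫⁻ y, G (x + y) := by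
        congr 1
        have hmp := (EuclideanSpace.volume_preserving_symm_measurableEquiv_toLp (Fin d)).symm
        exact hmp.lintegral_comp (hGmeas.comp (measurable_const.add measurable_id))
    _ = ENNReal.ofReal C * ∫⁻ y, G y := by
        congr 1
        exact lintegral_add_left_eq_self G x
theorem wShift {d : ℕ} {w : ℝ → EuclideanSpace ℝ (Fin d) → ℝ}
    (hW : IsWFS d w) (hwM : WFS_wM_B d w) (k : ℕ) :
    ∀ l, 0 < l → ∃ m, 0 < m ∧ m ≤ l ∧ ∃ C, 0 < C ∧
      ∀ z u : EuclideanSpace ℝ (Fin d), ‖u‖ ≤ (k:ℝ) → w l (z + u) ≤ C * w m z := by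
  induction k with
  | zero =>
    intro l hl
    refine ⟨l, hl, le_rfl, 1, one_pos, fun z u hu => ?_⟩
    have : u = 0 := norm_le_zero_iff.mp (by exact_mod_cast hu)
    simp [this]
  | succ k ih =>
    intro l hl
    obtain ⟨m₁, hm₁, C₁, hC₁, h₁⟩ := hwM l hl
    obtain ⟨m₂, hm₂, hm₂le, C₂, hC₂, h₂⟩ := ih m₁ hm₁
    refine ⟨min m₂ l, lt_min hm₂ hl, min_le_right _ _, C₁ * C₂,
      mul_pos hC₁ hC₂, fun z u hu => ?_⟩
    by_cases hu0 : u = 0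
    · subst hu0
      have e1 : w l (z + 0) = w l ((z + 0) + 0) := by simp
      calc w l (z + 0) ≤ C₁ * w m₁ z := by
            have := h₁ z 0 (by simp)
            simpa using this
        _ ≤ C₁ * (C₂ * w m₂ z) := by
            have := h₂ z 0 (by simp)
            have h3 : w m₁ (z + 0) ≤ C₂ * w m₂ z := this
            simp only [add_zero] at h3
            nlinarith
        _ = C₁ * C₂ * w m₂ z := by ring
        _ ≤ C₁ * C₂ * w (min m₂ l) z := by
            have := hW.mono (min m₂ l) m₂ (lt_min hm₂ hl) (min_le_left _ _) z
            exact mul_le_mul_of_nonneg_left this (by positivity)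
    · set c : ℝ := (max (‖u‖ - 1) 0) / ‖u‖ with hc
      have hunorm : 0 < ‖u‖ := norm_pos_iff.mpr hu0
      have hc0 : 0 ≤ c := div_nonneg (le_max_right _ 0) hunorm.le
      set u' : EuclideanSpace ℝ (Fin d) := c • u with hu'
      have hnu' : ‖u'‖ = max (‖u‖ - 1) 0 := by
        rw [hu', norm_smul, Real.norm_of_nonneg hc0, hc, div_mul_cancel₀]
        exact hunorm.ne'
      have hnu'k : ‖u'‖ ≤ (k:ℝ) := by
        rw [hnu']
        rcases le_total (‖u‖ - 1) 0 with h | h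
        · simpa [max_eq_right h] using Nat.cast_nonneg k
        · rw [max_eq_left h]
          have : ‖u‖ ≤ (k:ℝ) + 1 := by push_cast at hu ⊢; linarith
          linarith
      have hnu'' : ‖u - u'‖ ≤ 1 := by
        have : u - u' = (1 - c) • u := by rw [hu', sub_smul, one_smul]
        rw [this, norm_smul]
        have hc1 : c ≤ 1 := by
          rw [hc, div_le_one hunorm]
          rcases le_total (‖u‖ - 1) 0 with h | h
          · rw [max_eq_right h]; linarith
          · rw [max_eq_left h]; linarith
        rw [Real.norm_of_nonneg (by linarith)]
        have : (1 - c) * ‖u‖ = ‖u‖ - max (‖u‖ - 1) 0 := by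
          rw [hc]; field_simp
        rw [this]
        rcases le_total (‖u‖ - 1) 0 with h | h
        · rw [max_eq_right h]; linarith
        · rw [max_eq_left h]; linarith
      have key : w l (z + u) = w l ((z + u') + (u - u')) := by
        congr 1
        abel
      calc w l (z + u) = w l ((z + u') + (u - u')) := key
        _ ≤ C₁ * w m₁ (z + u') := h₁ (z + u') (u - u') hnu''
        _ ≤ C₁ * (C₂ * w m₂ z) := by
            have := h₂ z u' hnu'k
            nlinarith
        _ = C₁ * C₂ * w m₂ z := by ring
        _ ≤ C₁ * C₂ * w (min m₂ l) z := by
            have := hW.mono (min m₂ l) m₂ (lt_min hm₂ hl) (min_le_left _ _) z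
            exact mul_le_mul_of_nonneg_left this (by positivity)

/-- Iterated (𝔐.2)': adding a multi-index of length at most `k`. -/

theorem Mshift {d : ℕ} {M : ℝ → (Fin d → ℕ) → ℝ}
    (hM : IsWSS d M) (hM2 : WSS_M2_B d M) (k : ℕ) :
    ∀ l, 0 < l → ∃ m, 0 < m ∧ m ≤ l ∧ ∃ C, 0 < C ∧ ∃ H, 1 ≤ H ∧
      ∀ α β : Fin d → ℕ, (∑ i, β i) ≤ k →
        M m (α + β) ≤ C * H ^ (∑ i, α i) * M l α := by
  induction k with
  | zero =>
    intro l hl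
    refine ⟨l, hl, le_rfl, 1, one_pos, 1, le_rfl, fun α β hβ => ?_⟩
    have hb : β = 0 := by
      funext i
      exact Finset.sum_eq_zero_iff.mp (Nat.le_zero.mp hβ) i (Finset.mem_univ i)
    subst hb
    simp [le_refl]
  | succ k ih =>
    intro l hl
    obtain ⟨m₁, hm₁, hm₁le, C₁, hC₁, H₁, hH₁, h₁⟩ := ih l hl
    obtain ⟨m₂, hm₂, C₂, hC₂, H₂, hH₂, h₂⟩ := hM2 m₁ hm₁
    set m := min m₂ m₁ with hm
    have hmpos : 0 < m := lt_min hm₂ hm₁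
    have hmle : m ≤ l := le_trans (min_le_right _ _) hm₁le
    set H₂' := max H₂ 1 with hH₂'
    have hH₂'1 : 1 ≤ H₂' := le_max_right _ _
    have hH₂'pos : 0 < H₂' := lt_of_lt_of_le one_pos hH₂'1
    set C := C₁ * C₂ * H₂' ^ (k + 1) + C₁ with hC
    have hCpos : 0 < C := by positivity
    set H := H₁ * H₂' with hH
    have hHpos : 1 ≤ H := by nlinarith
    refine ⟨m, hmpos, hmle, C, hCpos, H, hHpos, fun α β hβ => ?_⟩
    have hMmono : ∀ γ, M m γ ≤ M m₁ γ := fun γ =>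
      hM.mono m m₁ hmpos (min_le_right _ _) γ
    have hMl : 0 < M l α := hM.pos l hl α
    have hpow1 : (1:ℝ) ≤ H₁ ^ (∑ i, α i) := one_le_pow₀ hH₁
    have hpow2 : (1:ℝ) ≤ H₂' ^ (∑ i, α i) := one_le_pow₀ hH₂'1
    rcases Nat.lt_or_ge (∑ i, β i) (k+1) with hlt | hge
    · -- |β| ≤ k : use ih directly
      have := h₁ α β (by omega)
      calc M m (α + β) ≤ M m₁ (α + β) := hMmono _
        _ ≤ C₁ * H₁ ^ (∑ i, α i) * M l α := this
        _ ≤ C * H ^ (∑ i, α i) * M l α := by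
            apply mul_le_mul_of_nonneg_right _ hMl.le
            have h5 : H₁ ^ (∑ i, α i) ≤ H ^ (∑ i, α i) := by
              apply pow_le_pow_left₀ (by linarith)
              rw [hH]; nlinarith
            calc C₁ * H₁ ^ (∑ i, α i) ≤ C₁ * H ^ (∑ i, α i) :=
                  mul_le_mul_of_nonneg_left h5 hC₁.le
              _ ≤ C * H ^ (∑ i, α i) := by
                  apply mul_le_mul_of_nonneg_right _ (by positivity)
                  rw [hC]; nlinarith [pow_pos hH₂'pos (k+1), mul_pos hC₁ hC₂]
    · -- |β| = k+1
      have hsum : (∑ i, β i) = k + 1 := le_antisymm hβ hge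
      have hne : ∃ j, 0 < β j := by
        by_contra hcon
        push_neg at hcon
        have : (∑ i, β i) = 0 := Finset.sum_eq_zero (fun i _ => Nat.le_zero.mp (hcon i))
        omega
      obtain ⟨j, hj⟩ := hne
      set β' : Fin d → ℕ := fun i => if i = j then β i - 1 else β i with hβ'
      have hβeq : β = β' + Pi.single j 1 := by
        funext i
        by_cases hij : i = j
        · subst hij; simp [hβ']; omega
        · simp [hβ', hij, Pi.single_apply]
      have hβ'sum : (∑ i, β' i) = k := by
        have : (∑ i, β i) = (∑ i, β' i) + 1 := by
          rw [hβeq]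
          simp [Finset.sum_add_distrib, Pi.single_apply]
        omega
      have step1 : M m (α + β) ≤ M m₂ (α + β' + Pi.single j 1) := by
        rw [hβeq, ← add_assoc]
        exact hM.mono m m₂ hmpos (min_le_left _ _) _
      have step2 : M m₂ (α + β' + Pi.single j 1)
          ≤ C₂ * H₂ ^ (∑ i, (α + β') i) * M m₁ (α + β') := h₂ (α + β') j
      have hsum2 : (∑ i, (α + β') i) = (∑ i, α i) + k := by
        simp [Finset.sum_add_distrib, hβ'sum]
      have step3 : M m₁ (α + β') ≤ C₁ * H₁ ^ (∑ i, α i) * M l α := h₁ α β' (by omega)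
      have hH2H2' : H₂ ^ (∑ i, (α + β') i) ≤ H₂' ^ ((∑ i, α i) + k) := by
        rw [hsum2]
        exact pow_le_pow_left₀ hH₂.le (le_max_left _ _) _
      calc M m (α + β) ≤ C₂ * H₂ ^ (∑ i, (α + β') i) * M m₁ (α + β') :=
            le_trans step1 step2
        _ ≤ C₂ * H₂' ^ ((∑ i, α i) + k) * (C₁ * H₁ ^ (∑ i, α i) * M l α) := by
            apply mul_le_mul
            · exact mul_le_mul_of_nonneg_left hH2H2' hC₂.le
            · exact step3
            · exact (hM.pos m₁ hm₁ _).le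
            · positivity
        _ = (C₁ * C₂ * H₂' ^ k) * (H₁ * H₂') ^ (∑ i, α i) * M l α := by
            rw [pow_add, mul_pow]
            ring
        _ ≤ C * H ^ (∑ i, α i) * M l α := by
            apply mul_le_mul_of_nonneg_right _ hMl.le
            apply mul_le_mul_of_nonneg_right _ (by positivity)
            rw [hC]
            have : H₂' ^ k ≤ H₂' ^ (k+1) := pow_le_pow_right₀ hH₂'1 (by omega)
            nlinarith [mul_pos hC₁ hC₂, pow_pos hH₂'pos k]

/-- Absorbing the `H^{|α|}` factor using (L): uniform bound for shifts of length `≤ d`. -/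

theorem Mabsorb {d : ℕ} {M : ℝ → (Fin d → ℕ) → ℝ}
    (hM : IsWSS d M) (hM2 : WSS_M2_B d M) (hL : WSS_L_B d M) :
    ∀ l, 0 < l → ∃ m, 0 < m ∧ m ≤ l ∧ ∃ C, 0 < C ∧
      ∀ α β : Fin d → ℕ, (∑ i, β i) ≤ d → M m (α + β) ≤ C * M l α := by
  intro l hl
  obtain ⟨m₁, hm₁, hm₁le, C₁, hC₁, H₁, hH₁, h₁⟩ := Mshift hM hM2 d l hl
  obtain ⟨m₂, hm₂, C₂, hC₂, h₂⟩ := hL H₁ (lt_of_lt_of_le one_pos hH₁) m₁ hm₁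
  set m := min m₂ m₁ with hm
  have hmpos : 0 < m := lt_min hm₂ hm₁
  refine ⟨m, hmpos, le_trans (min_le_right _ _) hm₁le, C₂ * C₁,
    mul_pos hC₂ hC₁, fun α β hβ => ?_⟩
  have e1 : M m (α + β) ≤ M m₂ (α + β) := hM.mono m m₂ hmpos (min_le_left _ _) _
  have e2 : H₁ ^ (∑ i, (α + β) i) * M m₂ (α + β) ≤ C₂ * M m₁ (α + β) := h₂ (α + β)
  have e3 : M m₁ (α + β) ≤ C₁ * H₁ ^ (∑ i, α i) * M l α := h₁ α β hβ
  have hpowle : H₁ ^ (∑ i, α i) ≤ H₁ ^ (∑ i, (α + β) i) := by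
    apply pow_le_pow_right₀ hH₁
    simp [Finset.sum_add_distrib]
  have hpowpos : (0:ℝ) < H₁ ^ (∑ i, (α + β) i) := pow_pos (by linarith) _
  have hpowpos2 : (0:ℝ) < H₁ ^ (∑ i, α i) := pow_pos (by linarith) _
  -- M m₂ (α+β) ≤ C₂ * M m₁(α+β) / H₁^{|α+β|} ≤ C₂ C₁ H₁^{|α|-|α+β|} M l α ≤ C₂ C₁ M l α
  have hMl : 0 < M l α := hM.pos l hl α
  have hMm2 : 0 < M m₂ (α + β) := hM.pos m₂ hm₂ _
  nlinarith [mul_le_mul_of_nonneg_left e3 hC₂.le,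
    mul_le_mul_of_nonneg_left hpowle hMm2.le,
    mul_pos hC₂ hC₁]
theorem eLpNorm_lt_top_of_bounded_integrable {g : EuclideanSpace ℝ (Fin d) → ℝ}
    (hgmeas : AEStronglyMeasurable g (volume : Measure (EuclideanSpace ℝ (Fin d))))
    (hgnn : ∀ x, 0 ≤ g x) {C : ℝ} (hC : 0 < C) (hgC : ∀ x, g x ≤ C)
    (hgint : Integrable g (volume : Measure (EuclideanSpace ℝ (Fin d))))
    {p : ℝ≥0∞} (hp : 1 ≤ p) :
    eLpNorm g p (volume : Measure (EuclideanSpace ℝ (Fin d))) < ⊤ := by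
  rcases eq_or_ne p ⊤ with hptop | hptop
  · subst hptop
    rw [eLpNorm_exponent_top]
    exact (eLpNormEssSup_le_of_ae_bound (C := C)
      (Eventually.of_forall fun x => by
        rw [Real.norm_of_nonneg (hgnn x)]; exact hgC x)).trans_lt ENNReal.ofReal_lt_top
  · have hp0 : p ≠ 0 := by
      intro h; rw [h] at hp; exact absurd hp (by simp)
    rw [eLpNorm_eq_lintegral_rpow_enorm_toReal hp0 hptop]
    have hpr : 1 ≤ p.toReal := by simpa using ENNReal.toReal_mono hptop hp
    set pr := p.toReal with hprdef
    have hpr0 : 0 < pr := by linarith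
    set K := ENNReal.ofReal C with hK
    have hKne : K ^ (pr - 1) ≠ ⊤ := by
      exact (ENNReal.rpow_lt_top_of_nonneg (by linarith) ENNReal.ofReal_ne_top).ne
    have hbound : ∀ x : EuclideanSpace ℝ (Fin d),
        (‖g x‖₊ : ℝ≥0∞) ^ pr ≤ K ^ (pr - 1) * (‖g x‖₊ : ℝ≥0∞) := by
      intro x
      have hle : (‖g x‖₊ : ℝ≥0∞) ≤ K := by
        rw [hK, ← ofReal_norm_eq_coe_nnnorm]
        exact ENNReal.ofReal_le_ofReal (by rw [Real.norm_of_nonneg (hgnn x)]; exact hgC x)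
      rcases eq_or_ne (‖g x‖₊ : ℝ≥0∞) 0 with h0 | h0
      · rw [h0, ENNReal.zero_rpow_of_pos hpr0]; simp
      · calc (‖g x‖₊ : ℝ≥0∞) ^ pr = (‖g x‖₊ : ℝ≥0∞) ^ (pr - 1) * (‖g x‖₊ : ℝ≥0∞) ^ (1:ℝ) := by
              rw [← ENNReal.rpow_add _ _ h0 ENNReal.coe_ne_top]
              norm_num
          _ ≤ K ^ (pr - 1) * (‖g x‖₊ : ℝ≥0∞) := by
              rw [ENNReal.rpow_one]
              exact mul_le_mul_left (ENNReal.rpow_le_rpow hle (by linarith)) _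
    have hint : (∫⁻ x, (‖g x‖₊ : ℝ≥0∞) ^ pr) < ⊤ := by
      calc (∫⁻ x, (‖g x‖₊ : ℝ≥0∞) ^ pr) ≤ ∫⁻ x, K ^ (pr - 1) * (‖g x‖₊ : ℝ≥0∞) :=
            lintegral_mono hbound
        _ = K ^ (pr - 1) * ∫⁻ x, (‖g x‖₊ : ℝ≥0∞) := lintegral_const_mul' _ _ hKne
        _ < ⊤ := ENNReal.mul_lt_top hKne.lt_top hgint.2
    exact ENNReal.rpow_lt_top_of_nonneg (by positivity) hint.ne

theorem enn_norm_mul (z : ℂ) {r : ℝ} (hr : 0 ≤ r) :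
    (‖(‖z‖ * r : ℝ)‖₊ : ℝ≥0∞) = (‖z‖₊ : ℝ≥0∞) * ENNReal.ofReal r := by
  rw [← ofReal_norm_eq_coe_nnnorm, ← ofReal_norm_eq_coe_nnnorm,
    Real.norm_of_nonneg (by positivity), ENNReal.ofReal_mul (norm_nonneg z)]

theorem lint_eq_eLpNorm {d : ℕ} (h : EuclideanSpace ℝ (Fin d) → ℂ)
    (wm : EuclideanSpace ℝ (Fin d) → ℝ) (hwm : ∀ y, 0 ≤ wm y) :
    eLpNorm (fun y => ‖h y‖ * wm y) 1 volume
      = ∫⁻ y, (‖h y‖₊ : ℝ≥0∞) * ENNReal.ofReal (wm y) := by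
  rw [eLpNorm_one_eq_lintegral_enorm]
  exact lintegral_congr (fun y => enn_norm_mul (h y) (hwm y))

theorem ratio_lemma {d : ℕ} {w : ℝ → EuclideanSpace ℝ (Fin d) → ℝ}
    (hW : IsWFS d w) (hwM : WFS_wM_B d w) (hN : WFS_N_B d w) :
    ∀ l, 0 < l → ∃ m, 0 < m ∧ m ≤ l ∧ ∀ p : ℝ≥0∞, 1 ≤ p →
      eLpNorm (fun x => w l x / w m x) p volume < ⊤ := by
  intro l hl
  obtain ⟨m₁, hm₁, hint₁⟩ := hN l hl
  obtain ⟨m₂, hm₂, C₂, hC₂, hb₂⟩ := hwM l hl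
  set m := min m₁ (min m₂ l) with hmdef
  have hm : 0 < m := lt_min hm₁ (lt_min hm₂ hl)
  have hmle : m ≤ l := le_trans (min_le_right _ _) (min_le_right _ _)
  have hwmpos : ∀ x, (0:ℝ) < w m x := fun x => lt_of_lt_of_le one_pos (hW.one_le m hm x)
  have hwm1pos : ∀ x, (0:ℝ) < w m₁ x := fun x => lt_of_lt_of_le one_pos (hW.one_le m₁ hm₁ x)
  have hwlnn : ∀ x, (0:ℝ) ≤ w l x := fun x => le_trans zero_le_one (hW.one_le l hl x)
  have hmono1 : ∀ x, w m₁ x ≤ w m x := hW.mono m m₁ hm (min_le_left _ _)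
  have hmono2 : ∀ x, w m₂ x ≤ w m x :=
    hW.mono m m₂ hm (le_trans (min_le_right _ _) (min_le_left _ _))
  set g : EuclideanSpace ℝ (Fin d) → ℝ := fun x => w l x / w m x with hg
  have hgcont : Continuous g :=
    (hW.cont l hl).div (hW.cont m hm) (fun x => (hwmpos x).ne')
  have hgnn : ∀ x, 0 ≤ g x := fun x => div_nonneg (hwlnn x) (hwmpos x).le
  have hgC : ∀ x, g x ≤ C₂ := by
    intro x
    rw [hg, div_le_iff₀ (hwmpos x)]
    calc w l x = w l (x + 0) := by rw [add_zero]
      _ ≤ C₂ * w m₂ x := hb₂ x 0 (by simp)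
      _ ≤ C₂ * w m x := mul_le_mul_of_nonneg_left (hmono2 x) hC₂.le
  have hgint : Integrable g volume := by
    refine Integrable.mono hint₁ hgcont.aestronglyMeasurable (Eventually.of_forall fun x => ?_)
    rw [Real.norm_of_nonneg (hgnn x),
      Real.norm_of_nonneg (div_nonneg (hwlnn x) (hwm1pos x).le)]
    exact div_le_div_of_nonneg_left (hwlnn x) (hwm1pos x) (hmono1 x)
  exact ⟨m, hm, hmle, fun p hp =>
    eLpNorm_lt_top_of_bounded_integrable hgcont.aestronglyMeasurable hgnn hC₂ hgC hgint hp⟩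

theorem gsHolder {d : ℕ} {M : ℝ → (Fin d → ℕ) → ℝ} {w : ℝ → EuclideanSpace ℝ (Fin d) → ℝ}
    (hM : IsWSS d M) (hW : IsWFS d w) {l m : ℝ} (hl : 0 < l) (hm : 0 < m) (hmle : m ≤ l)
    (pout prat pin : ℝ≥0∞) (hpqr : 1 / pout = 1 / prat + 1 / pin)
    (φ : EuclideanSpace ℝ (Fin d) → ℂ) (hφ : ContDiff ℝ (⊤ : ℕ∞) φ) :
    gsNorm d (M l) (w l) pout φ
      ≤ eLpNorm (fun x => w l x / w m x) prat volume * gsNorm d (M m) (w m) pin φ := by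
  apply iSup_le
  intro α
  set g : EuclideanSpace ℝ (Fin d) → ℝ := fun x => w l x / w m x with hg
  have hwmpos : ∀ x, (0:ℝ) < w m x := fun x => lt_of_lt_of_le one_pos (hW.one_le m hm x)
  set Fm : EuclideanSpace ℝ (Fin d) → ℝ := fun x => ‖pdMulti d α φ x‖ * w m x with hFm
  have hFmcont : Continuous Fm :=
    ((pdMulti_contDiff hφ).continuous.norm).mul (hW.cont m hm)
  have hgcont : Continuous g :=
    (hW.cont l hl).div (hW.cont m hm) (fun x => (hwmpos x).ne')
  have hfuneq : (fun x => ‖pdMulti d α φ x‖ * w l x) = g • Fm := by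
    funext x
    show ‖pdMulti d α φ x‖ * w l x = g x * Fm x
    rw [hg, hFm]
    rw [div_mul_eq_mul_div, mul_comm, mul_div_assoc, mul_div_assoc,
      div_self (hwmpos x).ne', mul_one]
  haveI : ENNReal.HolderTriple prat pin pout := ⟨by simpa only [one_div] using hpqr.symm⟩
  have hH := eLpNorm_smul_le_mul_eLpNorm (μ := (volume : Measure (EuclideanSpace ℝ (Fin d)))) (f := Fm) (φ := g)
    (p := prat) (q := pin) (r := pout)
    hFmcont.aestronglyMeasurable hgcont.aestronglyMeasurable
  have hMpos : 0 < M l α := hM.pos l hl α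
  have hMmono : M m α ≤ M l α := hM.mono m l hm hmle α
  have hMmpos : 0 < M m α := hM.pos m hm α
  calc eLpNorm (fun x => ‖pdMulti d α φ x‖ * w l x) pout volume / ENNReal.ofReal (M l α)
      ≤ (eLpNorm g prat volume * eLpNorm Fm pin volume) / ENNReal.ofReal (M l α) := by
        rw [hfuneq]
        exact ENNReal.div_le_div_right hH _
    _ ≤ (eLpNorm g prat volume * eLpNorm Fm pin volume) / ENNReal.ofReal (M m α) := by
        apply ENNReal.div_le_div_left
        exact ENNReal.ofReal_le_ofReal hMmono
    _ = eLpNorm g prat volume * (eLpNorm Fm pin volume / ENNReal.ofReal (M m α)) :=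
        mul_div_assoc _ _ _
    _ ≤ eLpNorm g prat volume * gsNorm d (M m) (w m) pin φ := by
        apply mul_le_mul_right
        exact le_iSup (fun β => eLpNorm (fun x => ‖pdMulti d β φ x‖ * w m x) pin volume
          / ENNReal.ofReal (M m β)) α

theorem stepB {d : ℕ} {M : ℝ → (Fin d → ℕ) → ℝ} {w : ℝ → EuclideanSpace ℝ (Fin d) → ℝ}
    (hM : IsWSS d M) (hL : WSS_L_B d M) (hM2 : WSS_M2_B d M)
    (hW : IsWFS d w) (hwM : WFS_wM_B d w) :
    ∀ l, 0 < l → ∃ m, 0 < m ∧ m ≤ l ∧ ∃ K : ℝ≥0∞, K ≠ ⊤ ∧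
      ∀ φ, ContDiff ℝ (⊤ : ℕ∞) φ →
        gsNorm d (M l) (w l) ⊤ φ ≤ K * gsNorm d (M m) (w m) 1 φ := by
  intro l hl
  obtain ⟨mw, hmw, hmwle, Cw, hCw, hwsh⟩ := wShift hW hwM d l hl
  obtain ⟨mM, hmM, hmMle, CM, hCM, hMab⟩ := Mabsorb hM hM2 hL l hl
  set m := min mw mM with hmdef
  have hm : 0 < m := lt_min hmw hmM
  have hmle : m ≤ l := le_trans (min_le_left _ _) hmwle
  set K : ℝ≥0∞ := (2 ^ d : ℕ) * (ENNReal.ofReal Cw * ENNReal.ofReal CM) with hK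
  have hKne : K ≠ ⊤ := by
    rw [hK]
    exact (ENNReal.mul_lt_top (ENNReal.natCast_lt_top _)
      (ENNReal.mul_lt_top ENNReal.ofReal_lt_top ENNReal.ofReal_lt_top)).ne
  refine ⟨m, hm, hmle, K, hKne, fun φ hφ => ?_⟩
  set gs := gsNorm d (M m) (w m) 1 φ with hgs
  apply iSup_le
  intro α
  have hwmono : ∀ x, w mw x ≤ w m x := hW.mono m mw hm (min_le_left _ _)
  have hwmnn : ∀ y, (0:ℝ) ≤ w m y := fun y => le_trans zero_le_one (hW.one_le m hm y)
  have hbound : ∀ z u : EuclideanSpace ℝ (Fin d), ‖u‖ ≤ (d:ℝ) → w l (z + u) ≤ Cw * w m z := by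
    intro z u hu
    calc w l (z + u) ≤ Cw * w mw z := hwsh z u hu
      _ ≤ Cw * w m z := mul_le_mul_of_nonneg_left (hwmono z) hCw.le
  have hφα : ContDiff ℝ (⊤ : ℕ∞) (pdMulti d α φ) := pdMulti_contDiff hφ
  -- pointwise bound
  have hpt : ∀ x, (‖(fun x => ‖pdMulti d α φ x‖ * w l x) x‖₊ : ℝ≥0∞)
      ≤ K * gs * ENNReal.ofReal (M l α) := by
    intro x
    have h0 : (‖(‖pdMulti d α φ x‖ * w l x : ℝ)‖₊ : ℝ≥0∞)
        = ENNReal.ofReal (w l x) * (‖pdMulti d α φ x‖₊ : ℝ≥0∞) := by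
      rw [enn_norm_mul _ (le_trans zero_le_one (hW.one_le l hl x))]
      ring
    rw [h0]
    have hcube := cube_le Finset.univ (pdMulti d α φ) hφα x
    have hterm : ∀ T ∈ (Finset.univ : Finset (Fin d)).powerset,
        ENNReal.ofReal (w l x) * cubeInt d Finset.univ (chi T) (pdMulti d α φ) x
          ≤ ENNReal.ofReal Cw * (gs * ENNReal.ofReal (CM * M l α)) := by
      intro T _
      have h1 := cubeInt_weight hφα (chi T) (w l) (w m) (hW.cont m hm) hwmnn Cw hbound x
      have h2 : pdMulti d (chi T) (pdMulti d α φ) = pdMulti d (α + chi T) φ :=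
        pdMulti_comp α (chi T) hφ
      rw [h2] at h1
      have h3 : (∫⁻ y, (‖pdMulti d (α + chi T) φ y‖₊ : ℝ≥0∞) * ENNReal.ofReal (w m y))
          = eLpNorm (fun y => ‖pdMulti d (α + chi T) φ y‖ * w m y) 1 volume :=
        (lint_eq_eLpNorm _ _ hwmnn).symm
      rw [h3] at h1
      have h4 : eLpNorm (fun y => ‖pdMulti d (α + chi T) φ y‖ * w m y) 1 volume
          ≤ gs * ENNReal.ofReal (M m (α + chi T)) := by
        have h5 : eLpNorm (fun y => ‖pdMulti d (α + chi T) φ y‖ * w m y) 1 volume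
            / ENNReal.ofReal (M m (α + chi T)) ≤ gs :=
          le_iSup (fun β => eLpNorm (fun x => ‖pdMulti d β φ x‖ * w m x) 1 volume
            / ENNReal.ofReal (M m β)) (α + chi T)
        have hMne : ENNReal.ofReal (M m (α + chi T)) ≠ 0 := by
          simp only [ne_eq, ENNReal.ofReal_eq_zero, not_le]
          exact hM.pos m hm _
        exact (ENNReal.div_le_iff hMne ENNReal.ofReal_ne_top).mp h5
      have h6 : M m (α + chi T) ≤ CM * M l α := by
        calc M m (α + chi T) ≤ M mM (α + chi T) :=
              hM.mono m mM hm (min_le_right _ _) _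
          _ ≤ CM * M l α := hMab α (chi T) (chi_sum_le T)
      calc ENNReal.ofReal (w l x) * cubeInt d Finset.univ (chi T) (pdMulti d α φ) x
          ≤ ENNReal.ofReal Cw
            * eLpNorm (fun y => ‖pdMulti d (α + chi T) φ y‖ * w m y) 1 volume := h1
        _ ≤ ENNReal.ofReal Cw * (gs * ENNReal.ofReal (CM * M l α)) := by
            apply mul_le_mul_right
            exact le_trans h4 (mul_le_mul_right (ENNReal.ofReal_le_ofReal h6) _)
    calc ENNReal.ofReal (w l x) * (‖pdMulti d α φ x‖₊ : ℝ≥0∞)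
        ≤ ENNReal.ofReal (w l x)
          * ∑ T ∈ (Finset.univ : Finset (Fin d)).powerset,
              cubeInt d Finset.univ (chi T) (pdMulti d α φ) x := mul_le_mul_right hcube _
      _ = ∑ T ∈ (Finset.univ : Finset (Fin d)).powerset,
            ENNReal.ofReal (w l x) * cubeInt d Finset.univ (chi T) (pdMulti d α φ) x :=
          Finset.mul_sum _ _ _
      _ ≤ ∑ _T ∈ (Finset.univ : Finset (Fin d)).powerset,
            ENNReal.ofReal Cw * (gs * ENNReal.ofReal (CM * M l α)) :=
          Finset.sum_le_sum hterm
      _ = K * gs * ENNReal.ofReal (M l α) := by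
        rw [Finset.sum_const, Finset.card_powerset, Finset.card_univ, Fintype.card_fin]
        rw [nsmul_eq_mul, hK, ENNReal.ofReal_mul hCM.le]
        ring
  have hess : eLpNorm (fun x => ‖pdMulti d α φ x‖ * w l x) ⊤ volume
      ≤ K * gs * ENNReal.ofReal (M l α) := by
    rw [eLpNorm_exponent_top]
    exact essSup_le_of_ae_le _ (Eventually.of_forall hpt)
  have hMne : ENNReal.ofReal (M l α) ≠ 0 := by
    simp only [ne_eq, ENNReal.ofReal_eq_zero, not_le]
    exact hM.pos l hl _
  exact (ENNReal.div_le_iff hMne ENNReal.ofReal_ne_top).mpr hess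

end

/-- Under (L), (𝔐.2)', (wM) and (N), the classes `𝒮^{(𝔐)}_{(𝒲),q}` coincide for all
`q ∈ [1,∞]`, with continuous inclusions at the level of the defining seminorms. -/
theorem stmt12 (d : ℕ) (M : ℝ → (Fin d → ℕ) → ℝ) (w : ℝ → EuclideanSpace ℝ (Fin d) → ℝ)
    (hM : IsWSS d M) (hL : WSS_L_B d M) (hM2 : WSS_M2_B d M)
    (hW : IsWFS d w) (hwM : WFS_wM_B d w) (hN : WFS_N_B d w) :
    ∀ q r : ℝ≥0∞, 1 ≤ q → 1 ≤ r →
      (∀ φ, gsBeurling d M w q φ ↔ gsBeurling d M w r φ) ∧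
      (∀ l, 0 < l → ∃ m, 0 < m ∧ ∃ C, 0 < C ∧
        ∀ φ : EuclideanSpace ℝ (Fin d) → ℂ, ContDiff ℝ (⊤ : ℕ∞) φ →
          gsNorm d (M m) (w m) q φ < ⊤ →
          gsNorm d (M l) (w l) r φ ≤ ENNReal.ofReal C * gsNorm d (M m) (w m) q φ) := by
  have main : ∀ q r : ℝ≥0∞, 1 ≤ q → 1 ≤ r → ∀ l, 0 < l → ∃ m, 0 < m ∧ ∃ C, 0 < C ∧
      ∀ φ : EuclideanSpace ℝ (Fin d) → ℂ, ContDiff ℝ (⊤ : ℕ∞) φ →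
        gsNorm d (M l) (w l) r φ ≤ ENNReal.ofReal C * gsNorm d (M m) (w m) q φ := by
    intro q r hq hr l hl
    obtain ⟨m₁, hm₁, hm₁le, hrat₁⟩ := ratio_lemma hW hwM hN l hl
    obtain ⟨m₂, hm₂, hm₂le, K₂, hK₂ne, hB⟩ := stepB hM hL hM2 hW hwM m₁ hm₁
    obtain ⟨m₃, hm₃, hm₃le, hrat₃⟩ := ratio_lemma hW hwM hN m₂ hm₂
    set p' : ℝ≥0∞ := (1 - q⁻¹)⁻¹ with hp'
    have hp'1 : 1 ≤ p' := by
      rw [hp', ENNReal.one_le_inv]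
      exact tsub_le_self
    have hconj : 1 / (1:ℝ≥0∞) = 1 / p' + 1 / q := by
      rw [hp', one_div, one_div, inv_inv, one_div,
        tsub_add_cancel_of_le (ENNReal.inv_le_one.mpr hq), inv_one]
    set K₁ := eLpNorm (fun x => w l x / w m₁ x) r volume with hK₁def
    have hK₁ : K₁ < ⊤ := hrat₁ r hr
    set K₃ := eLpNorm (fun x => w m₂ x / w m₃ x) p' volume with hK₃def
    have hK₃ : K₃ < ⊤ := hrat₃ p' hp'1
    set Ktot := K₁ * K₂ * K₃ with hKtotdef
    have hKtot : Ktot ≠ ⊤ := ENNReal.mul_ne_top (ENNReal.mul_ne_top hK₁.ne hK₂ne) hK₃.ne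
    refine ⟨m₃, hm₃, Ktot.toReal + 1, by positivity, fun φ hφ => ?_⟩
    have i1 : gsNorm d (M l) (w l) r φ ≤ K₁ * gsNorm d (M m₁) (w m₁) ⊤ φ :=
      gsHolder hM hW hl hm₁ hm₁le r r ⊤ (by simp) φ hφ
    have i2 := hB φ hφ
    have i3 : gsNorm d (M m₂) (w m₂) 1 φ ≤ K₃ * gsNorm d (M m₃) (w m₃) q φ :=
      gsHolder hM hW hm₂ hm₃ hm₃le 1 p' q hconj φ hφ
    calc gsNorm d (M l) (w l) r φ
        ≤ K₁ * (K₂ * (K₃ * gsNorm d (M m₃) (w m₃) q φ)) :=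
          le_trans i1 (mul_le_mul_right (le_trans i2 (mul_le_mul_right i3 _)) _)
      _ = Ktot * gsNorm d (M m₃) (w m₃) q φ := by rw [hKtotdef]; ring
      _ ≤ ENNReal.ofReal (Ktot.toReal + 1) * gsNorm d (M m₃) (w m₃) q φ := by
          apply mul_le_mul_left
          conv_lhs => rw [← ENNReal.ofReal_toReal hKtot]
          exact ENNReal.ofReal_le_ofReal (by linarith)
  intro q r hq hr
  refine ⟨fun φ => ⟨?_, ?_⟩, ?_⟩
  · rintro ⟨hs, hfin⟩
    refine ⟨hs, fun l hl => ?_⟩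
    obtain ⟨m, hm, C, hC, hineq⟩ := main q r hq hr l hl
    exact lt_of_le_of_lt (hineq φ hs)
      (ENNReal.mul_lt_top ENNReal.ofReal_lt_top (hfin m hm))
  · rintro ⟨hs, hfin⟩
    refine ⟨hs, fun l hl => ?_⟩
    obtain ⟨m, hm, C, hC, hineq⟩ := main r q hr hq l hl
    exact lt_of_le_of_lt (hineq φ hs)
      (ENNReal.mul_lt_top ENNReal.ofReal_lt_top (hfin m hm))
  · intro l hl
    obtain ⟨m, hm, C, hC, hineq⟩ := main q r hq hr l hl
    exact ⟨m, hm, C, hC, fun φ hφ _ => hineq φ hφ⟩
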